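/- The corner correlation and the fourth root of the bulk correlation have the same log-asymptotics: ln ω_c(k,0) ∼ (1/4)·ln ω(k,0) ∼ k² ln(√3/4) as k → ∞. -/

import Mathlib

open Filter Asymptotics
open Finset Topology

/-- The corner correlation `ω_c(k,0) = 3^{(k²+k)/2}/2^{2k²+k}` of the dent of size `k`
in the 90 degree wedge with mixed boundary conditions (note `k²+k` is even). -/
noncomputable def omegaC (k : ℕ) : ℝ :=
  (3 : ℝ) ^ ((k ^ 2 + k) / 2) / (2 : ℝ) ^ (2 * k ^ 2 + k)

/-- The explicit bulk correlation `ω(k,0)` of the vertical bowtie with lobes of size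
`k` (Theorem 7 of the paper). -/
noncomputable def omegaBulk (k : ℕ) : ℝ :=
  Real.Gamma (2 * (k : ℝ) + 1) * Real.Gamma ((k : ℝ) + 1 / 2) /
      (Real.pi ^ k * Real.Gamma ((k : ℝ) + 1) * Real.Gamma (2 * (k : ℝ) + 1 / 2)) *
    (∏ i ∈ Finset.Icc 1 k,
      Real.Gamma (i : ℝ) * Real.Gamma (2 * (i : ℝ) - 1) /
        Real.Gamma ((k : ℝ) + i - 1 / 2)) ^ 2 *
    ((3 : ℝ) ^ (2 * k ^ 2) / (2 : ℝ) ^ (6 * k ^ 2 + 2 * k))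

noncomputable def lf (n : ℕ) : ℝ := Real.log (n.factorial)
noncomputable def eps (n : ℕ) : ℝ := lf (2*n) - 2 * lf n - n * Real.log 4
noncomputable def Gf (n : ℕ) : ℝ := ∑ j ∈ range n, lf j

lemma fac_pos (n : ℕ) : (0:ℝ) < (n.factorial : ℝ) := by exact_mod_cast n.factorial_pos
lemma fac_ne (n : ℕ) : (n.factorial : ℝ) ≠ 0 := (fac_pos n).ne'

lemma two_mul_factorial (n : ℕ) :
    ((2*n).factorial : ℝ) = (Nat.centralBinom n : ℝ) * (n.factorial : ℝ)^2 := by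
  have h := Nat.choose_mul_factorial_mul_factorial (show n ≤ 2*n by omega)
  have : (2*n).choose n * (n.factorial * (2*n - n).factorial) = (2*n).factorial := by
    rw [← h]; ring
  rw [show 2*n - n = n by omega] at this
  rw [← this, Nat.centralBinom]
  push_cast; ring

lemma centralBinom_le_four_pow (n : ℕ) : Nat.centralBinom n ≤ 4^n := by
  have h1 : Nat.centralBinom n ≤ ∑ i ∈ range (2*n+1), (2*n).choose i := by
    have : n ∈ range (2*n+1) := by simp; omega
    rw [Nat.centralBinom]
    exact Finset.single_le_sum (f := fun i => (2*n).choose i) (fun i _ => Nat.zero_le _) this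
  have h2 : ∑ i ∈ range (2*n+1), (2*n).choose i = 2^(2*n) := Nat.sum_range_choose (2*n)
  calc Nat.centralBinom n ≤ 2^(2*n) := h1.trans_eq h2
    _ = 4^n := by rw [pow_mul]; norm_num
lemma four_pow_le (n : ℕ) : 4^n ≤ (2*n+1) * Nat.centralBinom n := by
  have h2 : (2:ℕ)^(2*n) = ∑ i ∈ range (2*n+1), (2*n).choose i := (Nat.sum_range_choose (2*n)).symm
  calc (4:ℕ)^n = 2^(2*n) := by rw [pow_mul]; norm_num
    _ = ∑ i ∈ range (2*n+1), (2*n).choose i := h2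
    _ ≤ ∑ _i ∈ range (2*n+1), Nat.centralBinom n :=
        Finset.sum_le_sum (fun i _ => Nat.choose_le_centralBinom i n)
    _ = (2*n+1) * Nat.centralBinom n := by rw [Finset.sum_const, card_range, smul_eq_mul]

lemma eps_eq (n : ℕ) : eps n = Real.log (Nat.centralBinom n) - n * Real.log 4 := by
  unfold eps lf
  rw [two_mul_factorial n, Real.log_mul (by exact_mod_cast (Nat.centralBinom_pos n).ne') (by positivity),
    Real.log_pow]
  ring

lemma eps_nonpos (n : ℕ) : eps n ≤ 0 := by
  rw [eps_eq]
  have h : Real.log (Nat.centralBinom n) ≤ Real.log ((4:ℝ)^n) := by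
    apply Real.log_le_log (by exact_mod_cast Nat.centralBinom_pos n)
    exact_mod_cast centralBinom_le_four_pow n
  rw [Real.log_pow] at h; linarith

lemma eps_lb (n : ℕ) : -Real.log (2*(n:ℝ)+1) ≤ eps n := by
  rw [eps_eq]
  have h : Real.log ((4:ℝ)^n) ≤ Real.log ((2*(n:ℝ)+1) * Nat.centralBinom n) := by
    apply Real.log_le_log (by positivity)
    exact_mod_cast four_pow_le n
  rw [Real.log_pow, Real.log_mul (by positivity) (by exact_mod_cast (Nat.centralBinom_pos n).ne')] at h
  linarith

lemma eps_abs (n : ℕ) : |eps n| ≤ Real.log (2*(n:ℝ)+1) := by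
  rw [abs_le]
  exact ⟨eps_lb n, (eps_nonpos n).trans (Real.log_nonneg (by linarith [Nat.cast_nonneg (α := ℝ) n]))⟩

lemma lf_succ (n : ℕ) : lf (n+1) = Real.log ((n:ℝ)+1) + lf n := by
  unfold lf
  rw [Nat.factorial_succ]
  push_cast
  rw [Real.log_mul (by positivity) (fac_ne n)]

lemma Gamma_nat_add_half (n : ℕ) :
    Real.Gamma ((n:ℝ) + 1/2) =
      ((2*n).factorial : ℝ) * Real.sqrt Real.pi / (4^n * (n.factorial : ℝ)) := by
  induction n with
  | zero =>
    rw [show ((0:ℕ):ℝ) + 1/2 = 1/2 by norm_num, Real.Gamma_one_half_eq]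
    norm_num
  | succ n ih =>
    have h1 : ((n+1 : ℕ):ℝ) + 1/2 = ((n:ℝ) + 1/2) + 1 := by push_cast; ring
    rw [h1, Real.Gamma_add_one (by positivity), ih]
    have hfac : ((2*(n+1)).factorial : ℝ) = (2*(n:ℝ)+2)*(2*(n:ℝ)+1)*((2*n).factorial : ℝ) := by
      rw [show 2*(n+1) = (2*n+1)+1 by ring, Nat.factorial_succ, Nat.factorial_succ]
      push_cast; ring
    have hfac2 : (((n+1)).factorial : ℝ) = ((n:ℝ)+1)*(n.factorial : ℝ) := by
      rw [Nat.factorial_succ]; push_cast; ring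
    rw [hfac, hfac2]
    have h4 : ((4:ℝ)^(n+1)) = 4 * 4^n := by ring
    rw [h4]
    field_simp
    ring

-- H lemma
lemma Hlemma (k : ℕ) : 4 * Gf k - Gf (2*k) =
    -(Real.log 4) * ((k:ℝ)^2 - k) + ∑ j ∈ range k, (-2 * eps j - Real.log (2*(j:ℝ)+1)) := by
  induction k with
  | zero => simp [Gf]
  | succ k ih =>
    have hG1 : Gf (k+1) = Gf k + lf k := by rw [Gf, Gf, Finset.sum_range_succ]
    have hG2 : Gf (2*(k+1)) = Gf (2*k) + lf (2*k) + lf (2*k+1) := by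
      rw [show 2*(k+1) = (2*k+1)+1 by ring, Gf, Finset.sum_range_succ, Finset.sum_range_succ, Gf]
    have hlf : lf (2*k+1) = Real.log (2*(k:ℝ)+1) + lf (2*k) := by
      rw [lf_succ (2*k)]; push_cast; ring_nf
    have heps : lf (2*k) = eps k + 2 * lf k + k * Real.log 4 := by unfold eps; ring
    rw [hG1, hG2, Finset.sum_range_succ, hlf, heps]
    push_cast
    linarith [ih]

lemma sqrtpi_pos : (0:ℝ) < Real.sqrt Real.pi := Real.sqrt_pos.mpr Real.pi_pos

-- single term of P
lemma term_eq (k j : ℕ) :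
    Real.Gamma (((1+j : ℕ)):ℝ) * Real.Gamma (2*(((1+j:ℕ)):ℝ) - 1) /
      Real.Gamma ((k:ℝ) + ((1+j:ℕ):ℝ) - 1/2)
    = ((j.factorial : ℝ) * ((2*j).factorial : ℝ) * (4^(k+j) * ((k+j).factorial : ℝ))) /
        (((2*(k+j)).factorial : ℝ) * Real.sqrt Real.pi) := by
  have e1 : ((1+j:ℕ):ℝ) = (j:ℝ) + 1 := by push_cast; ring
  rw [e1, Real.Gamma_nat_eq_factorial]
  have e2 : 2*((j:ℝ)+1) - 1 = ((2*j:ℕ):ℝ) + 1 := by push_cast; ring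
  rw [e2, Real.Gamma_nat_eq_factorial]
  have e3 : (k:ℝ) + ((j:ℝ)+1) - 1/2 = ((k+j:ℕ):ℝ) + 1/2 := by push_cast; ring
  rw [e3, Gamma_nat_add_half]
  rw [div_div_eq_mul_div]

lemma log_term (k j : ℕ) :
    Real.log (((j.factorial : ℝ) * ((2*j).factorial : ℝ) * (4^(k+j) * ((k+j).factorial : ℝ))) /
        (((2*(k+j)).factorial : ℝ) * Real.sqrt Real.pi))
    = 3 * lf j - lf (k+j) + (eps j - eps (k+j)) + (j:ℝ) * Real.log 4 - Real.log Real.pi / 2 := by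
  have h1 : ((j.factorial : ℝ) * ((2*j).factorial : ℝ)) ≠ 0 := by positivity
  have h2 : ((4:ℝ)^(k+j) * ((k+j).factorial : ℝ)) ≠ 0 := by positivity
  have h3 : ((2*(k+j)).factorial : ℝ) ≠ 0 := fac_ne _
  have h4 : Real.sqrt Real.pi ≠ 0 := sqrtpi_pos.ne'
  rw [Real.log_div (by positivity) (by positivity), Real.log_mul h1 h2,
    Real.log_mul (fac_ne j) (fac_ne (2*j)), Real.log_mul (by positivity) (fac_ne (k+j)),
    Real.log_mul h3 h4, Real.log_pow, Real.log_sqrt Real.pi_pos.le]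
  simp only [eps, lf]
  push_cast
  ring

lemma sum_gauss (k : ℕ) : ∑ j ∈ range k, (j:ℝ) = ((k:ℝ)^2 - k)/2 := by
  induction k with
  | zero => simp
  | succ k ih => rw [Finset.sum_range_succ, ih]; push_cast; ring

lemma sum_shift (k : ℕ) : ∑ j ∈ range k, lf (k+j) = Gf (2*k) - Gf k := by
  have := Finset.sum_range_add lf k k
  rw [show 2*k = k+k by ring, Gf, Gf, this]
  ring

lemma logP (k : ℕ) :
    Real.log (∏ i ∈ Finset.Icc 1 k,
      Real.Gamma (i : ℝ) * Real.Gamma (2 * (i : ℝ) - 1) /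
        Real.Gamma ((k : ℝ) + i - 1 / 2))
    = (4 * Gf k - Gf (2*k)) + (∑ j ∈ range k, (eps j - eps (k+j)))
      + Real.log 4 * (((k:ℝ)^2 - k)/2) - k * (Real.log Real.pi / 2) := by
  rw [← Finset.Ico_add_one_right_eq_Icc, Finset.prod_Ico_eq_prod_range]
  simp only [Nat.add_sub_cancel]
  have hterm_pos : ∀ j : ℕ, 0 < Real.Gamma (((1+j:ℕ)):ℝ) * Real.Gamma (2*(((1+j:ℕ)):ℝ) - 1) /
      Real.Gamma ((k:ℝ) + ((1+j:ℕ):ℝ) - 1/2) := by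
    intro j
    have hj : (0:ℝ) ≤ ((1+j:ℕ):ℝ) - 1 := by push_cast; linarith [Nat.cast_nonneg (α := ℝ) j]
    have hk := Nat.cast_nonneg (α := ℝ) k
    have g1 : 0 < Real.Gamma (((1+j:ℕ)):ℝ) := Real.Gamma_pos_of_pos (by linarith)
    have g2 : 0 < Real.Gamma (2*(((1+j:ℕ)):ℝ) - 1) := Real.Gamma_pos_of_pos (by linarith)
    have g3 : 0 < Real.Gamma ((k:ℝ) + ((1+j:ℕ):ℝ) - 1/2) := Real.Gamma_pos_of_pos (by linarith)
    positivity
  rw [Real.log_prod (fun j _ => (hterm_pos j).ne')]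
  rw [Finset.sum_congr rfl (fun j _ => by rw [term_eq k j, log_term k j])]
  have hsplit : ∑ j ∈ range k,
      (3 * lf j - lf (k+j) + (eps j - eps (k+j)) + (j:ℝ) * Real.log 4 - Real.log Real.pi / 2)
      = 3 * Gf k - (∑ j ∈ range k, lf (k+j)) + (∑ j ∈ range k, (eps j - eps (k+j)))
        + (∑ j ∈ range k, (j:ℝ)) * Real.log 4 - k * (Real.log Real.pi / 2) := by
    rw [Finset.sum_sub_distrib, Finset.sum_add_distrib, Finset.sum_add_distrib,
      Finset.sum_sub_distrib, ← Finset.mul_sum, ← Finset.sum_mul, Finset.sum_const,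
      card_range, nsmul_eq_mul, Gf]
  rw [hsplit, sum_shift, sum_gauss]
  ring

lemma logA (k : ℕ) :
    Real.log (Real.Gamma (2 * (k : ℝ) + 1) * Real.Gamma ((k : ℝ) + 1 / 2) /
      (Real.pi ^ k * Real.Gamma ((k : ℝ) + 1) * Real.Gamma (2 * (k : ℝ) + 1 / 2)))
    = -(k:ℝ) * Real.log Real.pi + eps k - eps (2*k) := by
  have e1 : 2 * (k:ℝ) + 1 = ((2*k : ℕ):ℝ) + 1 := by push_cast; ring
  have e2 : 2 * (k:ℝ) + 1/2 = ((2*k : ℕ):ℝ) + 1/2 := by push_cast; ring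
  rw [e2, Gamma_nat_add_half (2*k), e1, Real.Gamma_nat_eq_factorial,
    Gamma_nat_add_half k, show ((k:ℝ) + 1) = ((k:ℕ):ℝ) + 1 from rfl, Real.Gamma_nat_eq_factorial]
  have heq : ((2*k).factorial : ℝ) * (((2*k).factorial : ℝ) * Real.sqrt Real.pi / (4^k * (k.factorial:ℝ))) /
      (Real.pi ^ k * (k.factorial:ℝ) * (((2*(2*k)).factorial : ℝ) * Real.sqrt Real.pi / (4^(2*k) * ((2*k).factorial:ℝ))))
      = (4:ℝ)^k * (((2*k).factorial : ℝ) * ((2*k).factorial : ℝ) * ((2*k).factorial : ℝ)) /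
        (Real.pi ^ k * ((k.factorial:ℝ) * (k.factorial:ℝ)) * ((2*(2*k)).factorial : ℝ)) := by
    have h1 := fac_ne k; have h2 := fac_ne (2*k); have h3 := fac_ne (2*(2*k))
    have h4 : Real.sqrt Real.pi ≠ 0 := sqrtpi_pos.ne'
    have h5 : (4:ℝ)^k ≠ 0 := by positivity
    have h6 : (4:ℝ)^(2*k) ≠ 0 := by positivity
    have h7 : Real.pi ^ k ≠ 0 := by positivity
    field_simp
    ring
  rw [heq]
  have p1 : (0:ℝ) < (4:ℝ)^k := by positivity
  have p2 : (0:ℝ) < ((2*k).factorial : ℝ) * ((2*k).factorial : ℝ) * ((2*k).factorial : ℝ) := by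
    have := fac_pos (2*k); positivity
  have p3 : (0:ℝ) < Real.pi ^ k := by positivity
  have p4 : (0:ℝ) < (k.factorial:ℝ) * (k.factorial:ℝ) := by have := fac_pos k; positivity
  have p5 := fac_pos (2*(2*k))
  rw [Real.log_div (by positivity) (by positivity), Real.log_mul p1.ne' p2.ne',
    Real.log_mul (mul_pos p3 p4).ne' p5.ne', Real.log_mul p3.ne' p4.ne',
    Real.log_mul (mul_pos (fac_pos (2*k)) (fac_pos (2*k))).ne' (fac_pos (2*k)).ne',
    Real.log_mul (fac_pos (2*k)).ne' (fac_pos (2*k)).ne',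
    Real.log_mul (fac_pos k).ne' (fac_pos k).ne', Real.log_pow, Real.log_pow]
  simp only [eps, lf]
  push_cast
  ring

noncomputable def Ef (k : ℕ) : ℝ :=
  -2*(k:ℝ)*Real.log Real.pi + eps k - eps (2*k)
  + 2*(∑ j ∈ range k, (-2*eps j - Real.log (2*(j:ℝ)+1)))
  + 2*∑ j ∈ range k, (eps j - eps (k+j))

lemma log4_eq : Real.log 4 = 2*Real.log 2 := by
  rw [show (4:ℝ) = 2^2 by norm_num, Real.log_pow]; push_cast; ring

lemma T_eq (k : ℕ) :
    Real.log (omegaBulk k) = (2*Real.log 3 - 8*Real.log 2)*(k:ℝ)^2 + Ef k := by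
  unfold omegaBulk
  have hApos : 0 < Real.Gamma (2 * (k : ℝ) + 1) * Real.Gamma ((k : ℝ) + 1 / 2) /
      (Real.pi ^ k * Real.Gamma ((k : ℝ) + 1) * Real.Gamma (2 * (k : ℝ) + 1 / 2)) := by
    have hk := Nat.cast_nonneg (α := ℝ) k
    have g1 : 0 < Real.Gamma (2*(k:ℝ)+1) := Real.Gamma_pos_of_pos (by linarith)
    have g2 : 0 < Real.Gamma ((k:ℝ)+1/2) := Real.Gamma_pos_of_pos (by linarith)
    have g3 : 0 < Real.Gamma ((k:ℝ)+1) := Real.Gamma_pos_of_pos (by linarith)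
    have g4 : 0 < Real.Gamma (2*(k:ℝ)+1/2) := Real.Gamma_pos_of_pos (by linarith)
    positivity
  have hPpos : 0 < ∏ i ∈ Finset.Icc 1 k,
      Real.Gamma (i : ℝ) * Real.Gamma (2 * (i : ℝ) - 1) /
        Real.Gamma ((k : ℝ) + i - 1 / 2) := by
    apply Finset.prod_pos
    intro i hi
    have h1 : 1 ≤ i := (Finset.mem_Icc.mp hi).1
    have h1' : (1:ℝ) ≤ (i:ℝ) := by exact_mod_cast h1
    have hk := Nat.cast_nonneg (α := ℝ) k
    have g1 : 0 < Real.Gamma (i:ℝ) := Real.Gamma_pos_of_pos (by linarith)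
    have g2 : 0 < Real.Gamma (2*(i:ℝ)-1) := Real.Gamma_pos_of_pos (by linarith)
    have g3 : 0 < Real.Gamma ((k:ℝ)+(i:ℝ)-1/2) := Real.Gamma_pos_of_pos (by linarith)
    positivity
  have hCpos : 0 < (3 : ℝ) ^ (2 * k ^ 2) / (2 : ℝ) ^ (6 * k ^ 2 + 2 * k) := by positivity
  rw [Real.log_mul (mul_ne_zero hApos.ne' (pow_ne_zero 2 hPpos.ne')) hCpos.ne',
    Real.log_mul hApos.ne' (pow_ne_zero 2 hPpos.ne'), Real.log_pow, logA, logP, Hlemma,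
    Real.log_div (by positivity) (by positivity), Real.log_pow, Real.log_pow]
  unfold Ef
  rw [log4_eq]
  push_cast
  ring

lemma log_omegaC (k : ℕ) : Real.log (omegaC k) =
    Real.log (Real.sqrt 3/4)*(k:ℝ)^2 + (Real.log 3/2 - Real.log 2)*(k:ℝ) := by
  unfold omegaC
  have hsq : Real.log (Real.sqrt 3/4) = Real.log 3/2 - 2*Real.log 2 := by
    rw [Real.log_div (by positivity) (by norm_num), Real.log_sqrt (by norm_num),
      show (4:ℝ) = 2^2 by norm_num, Real.log_pow]
    push_cast; ring
  have heven : Even (k^2+k) := by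
    have := Nat.even_mul_succ_self k
    rwa [show k*(k+1) = k^2+k by ring] at this
  obtain ⟨m, hm⟩ := heven
  have hdiv : (k^2+k)/2 = m := by omega
  rw [Real.log_div (by positivity) (by positivity), Real.log_pow, Real.log_pow, hdiv, hsq]
  have hm' : (m:ℝ) = ((k:ℝ)^2 + k)/2 := by
    have : ((k^2+k : ℕ):ℝ) = ((m+m : ℕ):ℝ) := by rw [hm]
    push_cast at this
    linarith
  rw [hm']
  push_cast
  ring

lemma Ef_bound (k : ℕ) : |Ef k| ≤
    2*(k:ℝ)*Real.log Real.pi + 2*Real.log (4*(k:ℝ)+1) + 10*(k:ℝ)*Real.log (4*(k:ℝ)+1) := by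
  have hk := Nat.cast_nonneg (α := ℝ) k
  have hM0 : (0:ℝ) ≤ Real.log (4*(k:ℝ)+1) := Real.log_nonneg (by linarith)
  have tri : ∀ a b : ℝ, |a - b| ≤ |a| + |b| := fun a b => by
    rw [sub_eq_add_neg]; simpa using abs_add_le a (-b)
  have habs : ∀ n : ℕ, (n:ℝ) ≤ 2*(k:ℝ) → |eps n| ≤ Real.log (4*(k:ℝ)+1) := by
    intro n hn
    refine (eps_abs n).trans (Real.log_le_log (by positivity) (by linarith))
  have hlog : ∀ j : ℕ, j ∈ range k → Real.log (2*(j:ℝ)+1) ≤ Real.log (4*(k:ℝ)+1) := by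
    intro j hj
    have : (j:ℝ) ≤ (k:ℝ) := by exact_mod_cast (Finset.mem_range.mp hj).le
    exact Real.log_le_log (by positivity) (by linarith)
  have hS1 : |∑ j ∈ range k, (-2*eps j - Real.log (2*(j:ℝ)+1))| ≤ (k:ℝ)*(3*Real.log (4*(k:ℝ)+1)) := by
    refine (Finset.abs_sum_le_sum_abs _ _).trans ?_
    have : ∀ j ∈ range k, |-2*eps j - Real.log (2*(j:ℝ)+1)| ≤ 3*Real.log (4*(k:ℝ)+1) := by
      intro j hj
      have h1 : |(-2)*eps j| = 2*|eps j| := by rw [abs_mul]; norm_num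
      have h2 : |Real.log (2*(j:ℝ)+1)| = Real.log (2*(j:ℝ)+1) :=
        abs_of_nonneg (Real.log_nonneg (by linarith [Nat.cast_nonneg (α := ℝ) j]))
      have h3 : (j:ℝ) ≤ 2*(k:ℝ) := by
        have : (j:ℝ) ≤ (k:ℝ) := by exact_mod_cast (Finset.mem_range.mp hj).le
        linarith
      calc |(-2)*eps j - Real.log (2*(j:ℝ)+1)| ≤ |(-2)*eps j| + |Real.log (2*(j:ℝ)+1)| := tri _ _
        _ = 2*|eps j| + Real.log (2*(j:ℝ)+1) := by rw [h1, h2]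
        _ ≤ 2*Real.log (4*(k:ℝ)+1) + Real.log (4*(k:ℝ)+1) := by
            have := habs j h3; have := hlog j hj; linarith
        _ = 3*Real.log (4*(k:ℝ)+1) := by ring
    calc ∑ j ∈ range k, |(-2)*eps j - Real.log (2*(j:ℝ)+1)|
        ≤ ∑ _j ∈ range k, 3*Real.log (4*(k:ℝ)+1) := Finset.sum_le_sum this
      _ = (k:ℝ)*(3*Real.log (4*(k:ℝ)+1)) := by
          rw [Finset.sum_const, card_range, nsmul_eq_mul]
  have hS2 : |∑ j ∈ range k, (eps j - eps (k+j))| ≤ (k:ℝ)*(2*Real.log (4*(k:ℝ)+1)) := by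
    refine (Finset.abs_sum_le_sum_abs _ _).trans ?_
    have : ∀ j ∈ range k, |eps j - eps (k+j)| ≤ 2*Real.log (4*(k:ℝ)+1) := by
      intro j hj
      have hjk : (j:ℝ) ≤ (k:ℝ) := by exact_mod_cast (Finset.mem_range.mp hj).le
      have h3 : (j:ℝ) ≤ 2*(k:ℝ) := by linarith
      have h4 : ((k+j:ℕ):ℝ) ≤ 2*(k:ℝ) := by push_cast; linarith
      calc |eps j - eps (k+j)| ≤ |eps j| + |eps (k+j)| := tri _ _
        _ ≤ 2*Real.log (4*(k:ℝ)+1) := by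
            have := habs j h3; have := habs (k+j) h4; linarith
    calc ∑ j ∈ range k, |eps j - eps (k+j)|
        ≤ ∑ _j ∈ range k, 2*Real.log (4*(k:ℝ)+1) := Finset.sum_le_sum this
      _ = (k:ℝ)*(2*Real.log (4*(k:ℝ)+1)) := by
          rw [Finset.sum_const, card_range, nsmul_eq_mul]
  have hek : |eps k| ≤ Real.log (4*(k:ℝ)+1) := habs k (by linarith)
  have he2k : |eps (2*k)| ≤ Real.log (4*(k:ℝ)+1) := habs (2*k) (by push_cast; linarith)
  have hpi : (0:ℝ) ≤ Real.log Real.pi := Real.log_nonneg (by linarith [Real.pi_gt_three])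
  have h0 : |(-2)*(k:ℝ)*Real.log Real.pi| = 2*(k:ℝ)*Real.log Real.pi := by
    rw [abs_mul, abs_mul]; rw [abs_of_nonneg hpi, abs_of_nonneg hk]; norm_num
  have tri5 : ∀ a b c d e : ℝ, |a + b - c + d + e| ≤ |a| + |b| + |c| + |d| + |e| := by
    intro a b c d e
    calc |a + b - c + d + e| ≤ |a + b - c + d| + |e| := abs_add_le _ _
      _ ≤ |a + b - c| + |d| + |e| := by linarith [abs_add_le (a+b-c) d]
      _ ≤ |a + b| + |c| + |d| + |e| := by linarith [tri (a+b) c]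
      _ ≤ |a| + |b| + |c| + |d| + |e| := by linarith [abs_add_le a b]
  unfold Ef
  have habs1 : |2*(∑ j ∈ range k, (-2*eps j - Real.log (2*(j:ℝ)+1)))|
      = 2*|∑ j ∈ range k, (-2*eps j - Real.log (2*(j:ℝ)+1))| := by
    rw [abs_mul]; norm_num
  have habs2 : |2*∑ j ∈ range k, (eps j - eps (k+j))|
      = 2*|∑ j ∈ range k, (eps j - eps (k+j))| := by
    rw [abs_mul]; norm_num
  have := tri5 (-2*(k:ℝ)*Real.log Real.pi) (eps k) (eps (2*k))
    (2*(∑ j ∈ range k, (-2*eps j - Real.log (2*(j:ℝ)+1))))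
    (2*∑ j ∈ range k, (eps j - eps (k+j)))
  rw [habs1, habs2, h0] at this
  linarith

lemma log_c_eq : Real.log (Real.sqrt 3/4) = Real.log 3/2 - 2*Real.log 2 := by
  rw [Real.log_div (by positivity) (by norm_num), Real.log_sqrt (by norm_num),
    show (4:ℝ) = 2^2 by norm_num, Real.log_pow]
  push_cast; ring

lemma log_lin : Tendsto (fun k:ℕ => Real.log (4*(k:ℝ)+1)/(k:ℝ)) atTop (𝓝 0) := by
  have h0 : Tendsto (fun x:ℝ => Real.log x / x) atTop (𝓝 0) :=
    Real.isLittleO_log_id_atTop.tendsto_div_nhds_zero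
  have h4k : Tendsto (fun k:ℕ => 4*(k:ℝ)+1) atTop atTop := by
    apply tendsto_atTop_add_const_right
    exact tendsto_natCast_atTop_atTop.const_mul_atTop (by norm_num)
  have hA : Tendsto (fun k:ℕ => Real.log (4*(k:ℝ)+1)/(4*(k:ℝ)+1)) atTop (𝓝 0) := h0.comp h4k
  have hB : Tendsto (fun k:ℕ => (4*(k:ℝ)+1)/(k:ℝ)) atTop (𝓝 4) := by
    have h : Tendsto (fun k:ℕ => 4 + 1/(k:ℝ)) atTop (𝓝 (4+0)) :=
      tendsto_const_nhds.add tendsto_one_div_atTop_nhds_zero_nat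
    rw [add_zero] at h
    apply h.congr'
    filter_upwards [eventually_ge_atTop 1] with k hk
    have hk' : (k:ℝ) ≠ 0 := Nat.cast_ne_zero.mpr (by omega)
    field_simp
  have h := hA.mul hB
  rw [zero_mul] at h
  apply h.congr'
  filter_upwards [eventually_ge_atTop 1] with k hk
  have hk' : (k:ℝ) ≠ 0 := Nat.cast_ne_zero.mpr (by omega)
  have h41 : 4*(k:ℝ)+1 ≠ 0 := by positivity
  field_simp

lemma hE : Tendsto (fun k:ℕ => Ef k/(k:ℝ)^2) atTop (𝓝 0) := by
  apply squeeze_zero_norm'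
    (a := fun k:ℕ => 2*Real.log Real.pi/(k:ℝ)
      + 2*(Real.log (4*(k:ℝ)+1)/(k:ℝ)*(1/(k:ℝ))) + 10*(Real.log (4*(k:ℝ)+1)/(k:ℝ)))
  · filter_upwards [eventually_ge_atTop 1] with k hk
    have hk' : (0:ℝ) < (k:ℝ) := by exact_mod_cast Nat.pos_of_ne_zero (by omega)
    have hk2 : (0:ℝ) < ((k:ℝ))^2 := by positivity
    have h1 : ‖Ef k/(k:ℝ)^2‖ = |Ef k|/(k:ℝ)^2 := by
      rw [Real.norm_eq_abs, abs_div, abs_of_nonneg hk2.le]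
    have h2 : |Ef k|/(k:ℝ)^2 ≤
        (2*(k:ℝ)*Real.log Real.pi + 2*Real.log (4*(k:ℝ)+1)
          + 10*(k:ℝ)*Real.log (4*(k:ℝ)+1))/(k:ℝ)^2 :=
      (div_le_div_iff_of_pos_right hk2).mpr (Ef_bound k)
    have h3 : (2*(k:ℝ)*Real.log Real.pi + 2*Real.log (4*(k:ℝ)+1)
          + 10*(k:ℝ)*Real.log (4*(k:ℝ)+1))/(k:ℝ)^2
        = 2*Real.log Real.pi/(k:ℝ)
          + 2*(Real.log (4*(k:ℝ)+1)/(k:ℝ)*(1/(k:ℝ))) + 10*(Real.log (4*(k:ℝ)+1)/(k:ℝ)) := by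
      field_simp
    rw [h1]
    rw [h3] at h2
    exact h2
  · have l1 : Tendsto (fun k:ℕ => 2*Real.log Real.pi/(k:ℝ)) atTop (𝓝 0) :=
      tendsto_const_div_atTop_nhds_zero_nat (2*Real.log Real.pi)
    have l2 : Tendsto (fun k:ℕ => 2*(Real.log (4*(k:ℝ)+1)/(k:ℝ)*(1/(k:ℝ)))) atTop (𝓝 (2*(0*0))) :=
      (log_lin.mul tendsto_one_div_atTop_nhds_zero_nat).const_mul 2
    have l3 : Tendsto (fun k:ℕ => 10*(Real.log (4*(k:ℝ)+1)/(k:ℝ))) atTop (𝓝 (10*0)) :=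
      log_lin.const_mul 10
    have h := (l1.add l2).add l3
    norm_num at h
    exact h.congr (fun k => by rw [one_div])

lemma hT : Tendsto (fun k:ℕ => Real.log (omegaBulk k)/(k:ℝ)^2) atTop
    (𝓝 (2*Real.log 3 - 8*Real.log 2)) := by
  have h : Tendsto (fun k:ℕ => (2*Real.log 3 - 8*Real.log 2) + Ef k/(k:ℝ)^2) atTop
      (𝓝 ((2*Real.log 3 - 8*Real.log 2) + 0)) := tendsto_const_nhds.add hE
  rw [add_zero] at h
  apply h.congr'
  filter_upwards [eventually_ge_atTop 1] with k hk
  have hk2 : ((k:ℝ))^2 ≠ 0 := pow_ne_zero _ (Nat.cast_ne_zero.mpr (by omega))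
  rw [T_eq]
  field_simp

/-- **Corollary 9**: the corner correlation and the fourth root of the bulk correlation
have the same log-asymptotics:
`ln ω_c(k,0) ∼ (1/4)·ln ω(k,0) ∼ k² ln(√3/4)` as `k → ∞`. -/
theorem same_log_asymptotics :
    ((fun k : ℕ => Real.log (omegaC k)) ~[atTop]
        fun k : ℕ => (1 / 4 : ℝ) * Real.log (omegaBulk k)) ∧
    ((fun k : ℕ => Real.log (omegaC k)) ~[atTop]
        fun k : ℕ => (k : ℝ) ^ 2 * Real.log (Real.sqrt 3 / 4)) := by
  have hcneg : Real.log (Real.sqrt 3/4) < 0 := by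
    apply Real.log_neg
    · positivity
    · rw [div_lt_one (by norm_num : (0:ℝ) < 4)]
      calc Real.sqrt 3 ≤ Real.sqrt 4 := Real.sqrt_le_sqrt (by norm_num)
        _ < 4 := by
            rw [show (4:ℝ) = 2^2 by norm_num, Real.sqrt_sq (by norm_num : (0:ℝ) ≤ 2)]
            norm_num
  have hcne : Real.log (Real.sqrt 3/4) ≠ 0 := hcneg.ne
  have hf : Tendsto (fun k:ℕ => Real.log (omegaC k)/(k:ℝ)^2) atTop
      (𝓝 (Real.log (Real.sqrt 3/4))) := by
    have h : Tendsto (fun k:ℕ => Real.log (Real.sqrt 3/4)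
        + (Real.log 3/2 - Real.log 2)*(1/(k:ℝ))) atTop
        (𝓝 (Real.log (Real.sqrt 3/4) + (Real.log 3/2 - Real.log 2)*0)) :=
      tendsto_const_nhds.add (tendsto_one_div_atTop_nhds_zero_nat.const_mul _)
    rw [mul_zero, add_zero] at h
    apply h.congr'
    filter_upwards [eventually_ge_atTop 1] with k hk
    have hk' : (k:ℝ) ≠ 0 := Nat.cast_ne_zero.mpr (by omega)
    rw [log_omegaC]
    field_simp
  have hdivkey : ∀ (a b : ℝ) (k : ℕ), (k:ℝ)^2 ≠ 0 → a/(k:ℝ)^2/(b/(k:ℝ)^2) = a/b := by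
    intro a b k hk2
    rw [div_div_eq_mul_div, div_mul_cancel₀ _ hk2]
  constructor
  · -- part 1
    have hg : Tendsto (fun k:ℕ => ((1/4:ℝ)*Real.log (omegaBulk k))/(k:ℝ)^2) atTop
        (𝓝 (Real.log (Real.sqrt 3/4))) := by
      have h := hT.const_mul (1/4 : ℝ)
      have heq : (1/4:ℝ)*(2*Real.log 3 - 8*Real.log 2) = Real.log (Real.sqrt 3/4) := by
        rw [log_c_eq]; ring
      rw [heq] at h
      apply h.congr (fun k => ?_)
      rw [mul_div_assoc]
    have hzne : ∀ᶠ k:ℕ in atTop, ((1/4:ℝ)*Real.log (omegaBulk k)) ≠ 0 := by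
      filter_upwards [hg.eventually_ne hcne] with k hk1
      intro h
      rw [h] at hk1
      simp at hk1
    rw [isEquivalent_iff_tendsto_one hzne]
    have hdiv := hf.div hg hcne
    rw [div_self hcne] at hdiv
    apply hdiv.congr'
    filter_upwards [eventually_ge_atTop 1] with k hk
    have hk2 : ((k:ℝ))^2 ≠ 0 := pow_ne_zero _ (Nat.cast_ne_zero.mpr (by omega))
    show _ = _
    simp only [Pi.div_apply]
    rw [hdivkey _ _ k hk2]
  · -- part 2
    have hzne : ∀ᶠ k:ℕ in atTop, ((k:ℝ)^2 * Real.log (Real.sqrt 3/4)) ≠ 0 := by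
      filter_upwards [eventually_ge_atTop 1] with k hk
      exact mul_ne_zero (pow_ne_zero _ (Nat.cast_ne_zero.mpr (by omega))) hcne
    rw [isEquivalent_iff_tendsto_one hzne]
    have h : Tendsto (fun k:ℕ => 1 + ((Real.log 3/2 - Real.log 2)/Real.log (Real.sqrt 3/4))*(1/(k:ℝ)))
        atTop (𝓝 (1 + ((Real.log 3/2 - Real.log 2)/Real.log (Real.sqrt 3/4))*0)) :=
      tendsto_const_nhds.add (tendsto_one_div_atTop_nhds_zero_nat.const_mul _)
    rw [mul_zero, add_zero] at h
    apply h.congr'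
    filter_upwards [eventually_ge_atTop 1] with k hk
    have hk' : (k:ℝ) ≠ 0 := Nat.cast_ne_zero.mpr (by omega)
    simp only [Pi.div_apply]
    rw [log_omegaC]
    field_simp
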